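/- The recurrence T(N) = k·T(N/k) + S(N) with T(N) = O(1) for N ≤ M, where k = ⌈(M/B)^{1/3}⌉ and S(N) is the cost of a k-way merge satisfying S(N) = m·S(N/m) + O(N/B) with m = ⌈(M/B)^{1/3}⌉ and S(N) = O(N/B) for N ≤ M, has solution T(N) = O((N/B)·log²_{M/B}(N/B)). -/

import Mathlib

set_option maxHeartbeats 1000000


/-- I/O recurrence for the external-memory oblivious mergesort:
with `k = m = ⌈(M/B)^{1/3}⌉`, if `T(N) ≤ k·T(N/k) + S(N)` for `N > M`,
`T(N) = O(1)` for `N ≤ M`, and the merge cost satisfies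
`S(N) ≤ m·S(N/m) + O(N/B)` for `N > M` with `S(N) = O(N/B)` for `N ≤ M`,
then `T(N) = O((N/B)·log²_{M/B}(N/B))`. -/
theorem mergesort_io_recurrence
    (M B c₀ c₁ : ℝ) (hB : 1 ≤ B) (hMB : 8 ≤ M / B)
    (hc₀ : 0 ≤ c₀) (hc₁ : 0 ≤ c₁)
    (k : ℕ) (hk : k = ⌈(M / B) ^ ((1 : ℝ) / 3)⌉₊)
    (T S : ℝ → ℝ) (hT0 : ∀ N, 0 ≤ T N) (hS0 : ∀ N, 0 ≤ S N)
    (hTbase : ∀ N, 0 < N → N ≤ M → T N ≤ c₀)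
    (hTrec : ∀ N, M < N → T N ≤ k * T (N / k) + S N)
    (hSbase : ∀ N, 0 < N → N ≤ M → S N ≤ c₁ * (N / B))
    (hSrec : ∀ N, M < N → S N ≤ k * S (N / k) + c₁ * (N / B)) :
    ∃ C : ℝ, 0 < C ∧ ∀ N, M ≤ N →
      T N ≤ C * (N / B) * (Real.logb (M / B) (N / B)) ^ 2 := by
  have hB0 : (0:ℝ) < B := lt_of_lt_of_le one_pos hB
  have hb1 : (1:ℝ) < M / B := by linarith
  have hM8B : 8 * B ≤ M := (le_div_iff₀ hB0).mp hMB
  have hM0 : (0:ℝ) < M := by linarith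
  obtain ⟨x, hxdef⟩ : ∃ x : ℝ, x = (M / B) ^ ((1:ℝ)/3) := ⟨_, rfl⟩
  have hx2 : (2:ℝ) ≤ x := by
    have h8 : ((8:ℝ)) ^ ((1:ℝ)/3) = 2 := by
      rw [show (8:ℝ) = 2 ^ (3:ℝ) by
            rw [show (3:ℝ) = ((3:ℕ):ℝ) by norm_num, Real.rpow_natCast]; norm_num,
        ← Real.rpow_mul (by norm_num : (0:ℝ) ≤ 2)]
      norm_num
    calc (2:ℝ) = (8:ℝ) ^ ((1:ℝ)/3) := h8.symm
      _ ≤ x := by rw [hxdef]; exact Real.rpow_le_rpow (by norm_num) hMB (by norm_num)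
  have hx0 : (0:ℝ) < x := by linarith
  have hkx : x ≤ (k:ℝ) := by rw [hk, hxdef]; exact Nat.le_ceil _
  have hkub : (k:ℝ) ≤ (3/2) * x := by
    have h1 : (k:ℝ) < x + 1 := by
      rw [hk, hxdef]; exact Nat.ceil_lt_add_one (by positivity)
    linarith
  have hk2 : (2:ℝ) ≤ (k:ℝ) := le_trans hx2 hkx
  have hk0 : (0:ℝ) < (k:ℝ) := by linarith
  have hkne : (k:ℝ) ≠ 0 := ne_of_gt hk0
  obtain ⟨d, hddef⟩ : ∃ d : ℝ, d = Real.logb (M/B) k := ⟨_, rfl⟩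
  have hd13 : (1:ℝ)/3 ≤ d := by
    have h1 : Real.logb (M/B) x = 1/3 := by
      rw [hxdef]; exact Real.logb_rpow (by linarith) (ne_of_gt hb1)
    calc (1:ℝ)/3 = Real.logb (M/B) x := h1.symm
      _ ≤ d := by rw [hddef]; exact Real.logb_le_logb_of_le hb1 hx0 hkx
  have hd0 : (0:ℝ) < d := by linarith
  obtain ⟨A, hAdef⟩ : ∃ A : ℝ, A = 2 * c₁ + 1 := ⟨_, rfl⟩
  have hA0 : (0:ℝ) < A := by rw [hAdef]; linarith
  have hA1 : (1:ℝ) ≤ A := by rw [hAdef]; linarith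
  -- archimedean: every N is ≤ M * k^n for some n
  have harch : ∀ N : ℝ, 0 < N → ∃ n : ℕ, N ≤ M * (k:ℝ)^n := by
    intro N hN0
    obtain ⟨n, hn⟩ := pow_unbounded_of_one_lt (N / M) (by norm_num : (1:ℝ) < 2)
    refine ⟨n, ?_⟩
    have h2k : (2:ℝ)^n ≤ (k:ℝ)^n := pow_le_pow_left₀ (by norm_num) hk2 n
    have : N / M ≤ (k:ℝ)^n := le_trans hn.le h2k
    calc N = M * (N / M) := by field_simp
      _ ≤ M * (k:ℝ)^n := by nlinarith
  -- The merge cost bound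
  have hSbnd : ∀ n : ℕ, ∀ N : ℝ, M < N → N ≤ M * (k:ℝ)^n →
      S N ≤ A * (N / B) * (1 + 3 * Real.logb (M/B) (N / M)) := by
    intro n
    induction n with
    | zero =>
      intro N hN hNle
      simp only [pow_zero, mul_one] at hNle
      linarith
    | succ n ih =>
      intro N hN hNle
      have hN0 : (0:ℝ) < N := lt_trans hM0 hN
      have hNB0 : (0:ℝ) < N / B := div_pos hN0 hB0
      have hg0 : 0 ≤ Real.logb (M/B) (N / M) :=
        Real.logb_nonneg hb1 ((le_div_iff₀ hM0).mpr (by linarith))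
      have hrec := hSrec N hN
      by_cases hcase : N / k ≤ M
      · have hbb := hSbase (N/k) (div_pos hN0 hk0) hcase
        have hks : (k:ℝ) * S (N/k) ≤ c₁ * (N / B) := by
          calc (k:ℝ) * S (N/k) ≤ k * (c₁ * (N/k/B)) :=
                mul_le_mul_of_nonneg_left hbb hk0.le
            _ = ((k:ℝ) * (N/(k:ℝ)/B)) * c₁ := by ring
            _ = c₁ * (N/B) := by rw [show (k:ℝ) * (N/(k:ℝ)/B) = N/B by field_simp]; ring
        have hAc : 2 * c₁ ≤ A * (1 + 3 * Real.logb (M/B) (N / M)) := by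
          nlinarith [mul_nonneg hA0.le hg0]
        nlinarith [mul_le_mul_of_nonneg_left hAc hNB0.le]
      · push_neg at hcase
        have hle : N / k ≤ M * (k:ℝ)^n := by
          rw [div_le_iff₀ hk0]
          calc N ≤ M * (k:ℝ)^(n+1) := hNle
            _ = M * (k:ℝ)^n * k := by ring
        have ih' := ih (N/k) hcase hle
        have hglog : Real.logb (M/B) (N/k/M) = Real.logb (M/B) (N/M) - d := by
          rw [show N/k/M = (N/M)/(k:ℝ) by ring,
            Real.logb_div (by positivity) hkne, hddef]
        rw [hglog] at ih'
        have hNk : (k:ℝ) * (N/(k:ℝ)/B) = N/B := by field_simp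
        have hkS : (k:ℝ) * S (N/k)
            ≤ A * (N/B) * (1 + 3 * Real.logb (M/B) (N/M)) - 3 * d * (A * (N/B)) := by
          calc (k:ℝ) * S (N/k)
              ≤ k * (A * (N/k/B) * (1 + 3 * (Real.logb (M/B) (N/M) - d))) :=
                mul_le_mul_of_nonneg_left ih' hk0.le
            _ = ((k:ℝ) * (N/(k:ℝ)/B)) * (A * (1 + 3 * (Real.logb (M/B) (N/M) - d))) := by
                ring
            _ = (N/B) * (A * (1 + 3 * (Real.logb (M/B) (N/M) - d))) := by rw [hNk]
            _ = A * (N/B) * (1 + 3 * Real.logb (M/B) (N/M)) - 3 * d * (A * (N/B)) := by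
                ring
        have h3d : (1:ℝ) ≤ 3 * d := by linarith
        have hcA : c₁ * (N/B) ≤ A * (N/B) :=
          mul_le_mul_of_nonneg_right (by linarith) hNB0.le
        have hAd : A * (N/B) ≤ 3 * d * (A * (N/B)) :=
          le_mul_of_one_le_left (mul_nonneg hA0.le hNB0.le) h3d
        linarith
  -- restated merge bound via logb (N/B)
  have hS' : ∀ N : ℝ, M < N →
      S N ≤ A * (N / B) * (3 * Real.logb (M/B) (N / B) - 2) := by
    intro N hN
    have hN0 : (0:ℝ) < N := lt_trans hM0 hN
    obtain ⟨n, hn⟩ := harch N hN0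
    have h1 := hSbnd n N hN hn
    have hsplit : Real.logb (M/B) (N/B) = Real.logb (M/B) (N/M) + 1 := by
      rw [show N/B = (N/M) * (M/B) by field_simp,
        Real.logb_mul (by positivity) (ne_of_gt (by linarith)),
        Real.logb_self_eq_one hb1]
    rw [hsplit]
    calc S N ≤ A * (N / B) * (1 + 3 * Real.logb (M/B) (N / M)) := h1
      _ = A * (N / B) * (3 * (Real.logb (M/B) (N/M) + 1) - 2) := by ring
  obtain ⟨C, hCdef⟩ : ∃ C : ℝ, C = 2 * c₀ + 9 * A := ⟨_, rfl⟩
  have hC0 : (0:ℝ) < C := by rw [hCdef]; linarith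
  have hC9A : 9 * A ≤ C := by rw [hCdef]; linarith
  have hC2c : 2 * c₀ ≤ C := by rw [hCdef]; linarith
  -- main bound
  have hTbnd : ∀ n : ℕ, ∀ N : ℝ, M ≤ N → N ≤ M * (k:ℝ)^n →
      T N ≤ C * (N / B) * (Real.logb (M/B) (N / B)) ^ 2 := by
    intro n
    induction n with
    | zero =>
      intro N hN hNle
      simp only [pow_zero, mul_one] at hNle
      have hNM : N = M := le_antisymm hNle hN
      subst hNM
      rw [Real.logb_self_eq_one hb1]
      have := hTbase N (by linarith) le_rfl
      nlinarith
    | succ n ih =>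
      intro N hN hNle
      have hN0 : (0:ℝ) < N := lt_of_lt_of_le hM0 hN
      have hNB0 : (0:ℝ) < N / B := div_pos hN0 hB0
      by_cases hNM : N ≤ M
      · have hNM' : N = M := le_antisymm hNM hN
        subst hNM'
        rw [Real.logb_self_eq_one hb1]
        have := hTbase N (by linarith) le_rfl
        nlinarith
      · push_neg at hNM
        obtain ⟨L, hLdef⟩ : ∃ L : ℝ, L = Real.logb (M/B) (N / B) := ⟨_, rfl⟩
        rw [← hLdef]
        have hL1 : (1:ℝ) ≤ L := by
          rw [hLdef]
          calc (1:ℝ) = Real.logb (M/B) (M/B) := (Real.logb_self_eq_one hb1).symm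
            _ ≤ Real.logb (M/B) (N/B) :=
              Real.logb_le_logb_of_le hb1 (by linarith) (by gcongr)
        have hrec := hTrec N hNM
        have hSN := hS' N hNM
        rw [← hLdef] at hSN
        by_cases hcase : N / k ≤ M
        · have hbb := hTbase (N/k) (div_pos hN0 hk0) hcase
          have hkT : (k:ℝ) * T (N/k) ≤ (3/2) * c₀ * (N/B) := by
            have hxMB : x ≤ M / B := by
              rw [hxdef]
              calc (M/B) ^ ((1:ℝ)/3) ≤ (M/B) ^ (1:ℝ) :=
                    Real.rpow_le_rpow_of_exponent_le hb1.le (by norm_num)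
                _ = M / B := Real.rpow_one _
            have hkNB : (k:ℝ) ≤ (3/2) * (N/B) := by
              have hMN : M / B ≤ N / B := by gcongr
              linarith
            calc (k:ℝ) * T (N/k) ≤ k * c₀ := mul_le_mul_of_nonneg_left hbb hk0.le
              _ ≤ ((3/2) * (N/B)) * c₀ := mul_le_mul_of_nonneg_right hkNB hc₀
              _ = (3/2) * c₀ * (N/B) := by ring
          have hL2 : (1:ℝ) ≤ L^2 := by nlinarith
          have hLL : L ≤ L^2 := by nlinarith
          have ha : (0:ℝ) ≤ (N/B) * (L^2 - 1) := mul_nonneg hNB0.le (by linarith)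
          have hb2 : (0:ℝ) ≤ (N/B) * (L^2 - L) := mul_nonneg hNB0.le (by linarith)
          nlinarith [mul_nonneg hc₀ ha, mul_nonneg hc₀ hNB0.le, mul_nonneg hA0.le hb2,
            mul_nonneg (mul_nonneg hA0.le hNB0.le) (sq_nonneg L),
            mul_nonneg hA0.le hNB0.le]
        · push_neg at hcase
          have hle : N / k ≤ M * (k:ℝ)^n := by
            rw [div_le_iff₀ hk0]
            calc N ≤ M * (k:ℝ)^(n+1) := hNle
              _ = M * (k:ℝ)^n * k := by ring
          have ih' := ih (N/k) hcase.le hle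
          have hLk : Real.logb (M/B) (N/k/B) = L - d := by
            rw [show N/k/B = (N/B)/(k:ℝ) by ring,
              Real.logb_div (by positivity) hkne, hddef, hLdef]
          rw [hLk] at ih'
          have h1d : 1 + d ≤ L := by
            have hMk : M * k / B ≤ N / B := by
              have : M * k ≤ N := by rw [lt_div_iff₀ hk0] at hcase; linarith
              gcongr
            have e1 : 1 + d = Real.logb (M/B) ((M/B) * k) := by
              rw [hddef, Real.logb_mul (ne_of_gt (by linarith)) hkne,
                Real.logb_self_eq_one hb1]
            rw [e1, hLdef, show (M/B) * (k:ℝ) = M * k / B by ring]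
            exact Real.logb_le_logb_of_le hb1 (by positivity) hMk
          have hNk : (k:ℝ) * (N/(k:ℝ)/B) = N/B := by field_simp
          have hkT : (k:ℝ) * T (N/k) ≤ C * (N/B) * (L - d)^2 := by
            calc (k:ℝ) * T (N/k) ≤ k * (C * (N/k/B) * (L - d)^2) :=
                mul_le_mul_of_nonneg_left ih' hk0.le
              _ = ((k:ℝ) * (N/(k:ℝ)/B)) * (C * (L - d)^2) := by ring
              _ = (N/B) * (C * (L - d)^2) := by rw [hNk]
              _ = C * (N/B) * (L - d)^2 := by ring
          -- (L-d)^2 ≤ L^2 - d*L,  and A*(3L-2) ≤ C*d*L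
          have hsq : (L - d)^2 ≤ L^2 - d * L := by nlinarith
          have hfin : C * (N/B) * (L-d)^2 + A * (N/B) * (3*L - 2)
              ≤ C * (N/B) * L^2 := by
            have h1 : C * (N/B) * (L-d)^2 ≤ C * (N/B) * (L^2 - d*L) :=
              mul_le_mul_of_nonneg_left hsq (mul_nonneg hC0.le hNB0.le)
            have hCd : 3*A ≤ C*d := by
              nlinarith [mul_nonneg hC0.le (by linarith : (0:ℝ) ≤ d - 1/3)]
            have h2' : 3*A*L ≤ C*d*L :=
              mul_le_mul_of_nonneg_right hCd (by linarith)
            have h2 : A * (3*L - 2) ≤ C * (d * L) := by linarith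
            have h3 : (N/B) * (A * (3*L-2)) ≤ (N/B) * (C * (d*L)) :=
              mul_le_mul_of_nonneg_left h2 hNB0.le
            linarith only [h1, h3]
          linarith only [hrec, hkT, hSN, hfin]
  refine ⟨C, hC0, fun N hN => ?_⟩
  obtain ⟨n, hn⟩ := harch N (by linarith)
  exact hTbnd n N hN hn
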